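/- arXiv:2601.10380 — 2 statements merged into one kernel-verified Lean document; each statement's English description precedes it below -/
import Mathlib

section
/- Let E, F, G be real Banach spaces, U ⊆ E and V ⊆ F open sets, p ≥ 1, and f : U × V → G a map of class C^p. Let (a,b) ∈ U × V with f(a,b) = 0. Let r_x, r_y > 0 be such that the open balls B_{r_x}(a) ⊆ U and B_{r_y}(b) ⊆ V, and let J₀ : F → G be a continuous linear isomorphism with continuous inverse J₀⁻¹. Assume that for all x ∈ B_{r_x}(a) and y ∈ B_{r_y}(b), the partial derivative D₂f(x,y) (with respect to the second variable) satisfies ‖D₂f(x,y) − J₀‖ ≤ 1/(2‖J₀⁻¹‖), and let M₁ > 0 be an upper bound for ‖D₁f(x,y)‖ over all (x,y) ∈ B_{r_x}(a) × B_{r_y}(b). Set r = min{ r_y/(2‖J₀⁻¹‖ M₁), r_x }. Then: (i) for every x ∈ B_r(a) there exists exactly one y ∈ B_{r_y}(b) with f(x,y) = 0; (ii) the resulting map g : B_r(a) → B_{r_y}(b), g(x) = y, satisfies g(a) = b and f(x, g(x)) = 0 for all x ∈ B_r(a); (iii) g is of class C^p, and for every x ∈ B_r(a), D₂f(x, g(x))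 is invertible and Dg(x) = −(D₂f(x, g(x)))⁻¹ ∘ D₁f(x, g(x)). -/
open Metric

set_option maxHeartbeats 1600000 in
/-- Modified implicit map theorem: if `f : U × V → G` is `C^p`,
`f(a,b) = 0`, the second partial derivative stays within `1/(2‖J₀⁻¹‖)` of a continuous linear
isomorphism `J₀` on `B_{r_x}(a) × B_{r_y}(b)`, and `M₁` bounds the first partial derivative
there, then on `B_r(a)` with `r = min(r_y/(2‖J₀⁻¹‖M₁), r_x)` there is a unique implicit map
`g` with `g(a) = b`, `f(x, g(x)) = 0`; it is `C^p` and
`Dg(x) = −(D₂f(x,g(x)))⁻¹ ∘ D₁f(x,g(x))`. -/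
theorem stmt_2 {E F G : Type*}
    [NormedAddCommGroup E] [NormedSpace ℝ E] [CompleteSpace E]
    [NormedAddCommGroup F] [NormedSpace ℝ F] [CompleteSpace F]
    [NormedAddCommGroup G] [NormedSpace ℝ G] [CompleteSpace G]
    (U : Set E) (V : Set F) (hU : IsOpen U) (hV : IsOpen V)
    (p : ℕ) (hp : 1 ≤ p) (f : E × F → G) (hf : ContDiffOn ℝ p f (U ×ˢ V))
    (a : E) (b : F) (haU : a ∈ U) (hbV : b ∈ V) (hfab : f (a, b) = 0)
    (rx ry : ℝ) (hrx : 0 < rx) (hry : 0 < ry)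
    (hballx : ball a rx ⊆ U) (hbally : ball b ry ⊆ V)
    (J₀ : F ≃L[ℝ] G)
    (hD2 : ∀ x ∈ ball a rx, ∀ y ∈ ball b ry,
      ‖fderiv ℝ (fun y' => f (x, y')) y - (J₀ : F →L[ℝ] G)‖ ≤
        1 / (2 * ‖(J₀.symm : G →L[ℝ] F)‖))
    (M₁ : ℝ) (hM₁ : 0 < M₁)
    (hD1 : ∀ x ∈ ball a rx, ∀ y ∈ ball b ry,
      ‖fderiv ℝ (fun x' => f (x', y)) x‖ ≤ M₁) :
    ∃ g : E → F,
      g a = b ∧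
      (∀ x ∈ ball a (min (ry / (2 * ‖(J₀.symm : G →L[ℝ] F)‖ * M₁)) rx),
        g x ∈ ball b ry ∧
        f (x, g x) = 0 ∧
        (∀ y ∈ ball b ry, f (x, y) = 0 → y = g x) ∧
        ∃ T : F ≃L[ℝ] G,
          (T : F →L[ℝ] G) = fderiv ℝ (fun y' => f (x, y')) (g x) ∧
          fderiv ℝ g x =
            -((T.symm : G →L[ℝ] F).comp (fderiv ℝ (fun x' => f (x', g x)) x))) ∧
      ContDiffOn ℝ p g
        (ball a (min (ry / (2 * ‖(J₀.symm : G →L[ℝ] F)‖ * M₁)) rx)) := by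
  classical
  by_cases hsub : Subsingleton F
  · -- trivial case: `F` (and hence `G`) is a subsingleton
    have hGsub : Subsingleton G := ⟨fun z w => by
      rw [← J₀.apply_symm_apply z, ← J₀.apply_symm_apply w,
        Subsingleton.elim (J₀.symm z) (J₀.symm w)]⟩
    refine ⟨fun _ => b, rfl, fun x hx => ?_, contDiffOn_const⟩
    refine ⟨mem_ball_self hry, Subsingleton.elim _ _,
      fun y _ _ => Subsingleton.elim _ _, J₀, ?_, ?_⟩
    · exact ContinuousLinearMap.ext fun y => Subsingleton.elim _ _
    · exact ContinuousLinearMap.ext fun u => Subsingleton.elim _ _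
  · haveI : Nontrivial F := not_subsingleton_iff_nontrivial.mp hsub
    set L : ℝ := ‖(J₀.symm : G →L[ℝ] F)‖ with hLdef
    have hL : 0 < L := by
      rw [hLdef, norm_pos_iff]
      intro h0
      obtain ⟨y, hy⟩ := exists_ne (0 : F)
      apply hy
      have : (J₀.symm : G →L[ℝ] F) (J₀ y) = y := J₀.symm_apply_apply y
      rw [h0] at this
      simpa using this.symm
    set r : ℝ := min (ry / (2 * L * M₁)) rx with hrdef
    have hr : 0 < r := lt_min (div_pos hry (by positivity)) hrx
    have hrle1 : r ≤ ry / (2 * L * M₁) := min_le_left _ _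
    have hrle2 : r ≤ rx := min_le_right _ _
    have hopen : IsOpen (U ×ˢ V) := hU.prod hV
    have hp' : (1 : WithTop ℕ∞) ≤ (p : WithTop ℕ∞) := by exact_mod_cast hp
    have hp0 : (p : WithTop ℕ∞) ≠ 0 := by exact_mod_cast (show p ≠ 0 by omega)
    have hfat : ∀ x ∈ U, ∀ y ∈ V, DifferentiableAt ℝ f (x, y) := fun x hx y hy =>
      (hf.differentiableOn hp0).differentiableAt (hopen.mem_nhds ⟨hx, hy⟩)
    -- partial derivatives
    have hD2at : ∀ x ∈ U, ∀ y ∈ V,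
        HasFDerivAt (fun y' => f (x, y')) (fderiv ℝ (fun y' => f (x, y')) y) y := by
      intro x hx y hy
      exact (((hfat x hx y hy).comp y
        (hasFDerivAt_prodMk_right x y).differentiableAt)).hasFDerivAt
    have hD1at : ∀ x ∈ U, ∀ y ∈ V,
        HasFDerivAt (fun x' => f (x', y)) (fderiv ℝ (fun x' => f (x', y)) x) x := by
      intro x hx y hy
      exact (((hfat x hx y hy).comp x
        (hasFDerivAt_prodMk_left x y).differentiableAt)).hasFDerivAt
    -- Lipschitz estimate for the auxiliary contraction
    have hphi_lip : ∀ x ∈ ball a rx, ∀ y₁ ∈ ball b ry, ∀ y₂ ∈ ball b ry,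
        ‖(y₁ - J₀.symm (f (x, y₁))) - (y₂ - J₀.symm (f (x, y₂)))‖ ≤ 2⁻¹ * ‖y₁ - y₂‖ := by
      intro x hx y₁ hy₁ y₂ hy₂
      have hxU : x ∈ U := hballx hx
      refine Convex.norm_image_sub_le_of_norm_hasFDerivWithin_le
        (f := fun y => y - J₀.symm (f (x, y)))
        (f' := fun y => ContinuousLinearMap.id ℝ F -
          (J₀.symm : G →L[ℝ] F).comp (fderiv ℝ (fun y' => f (x, y')) y))
        (fun y hy => ?_) (fun y hy => ?_) (convex_ball b ry) hy₂ hy₁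
      · exact ((hasFDerivAt_id y).sub
          (((J₀.symm : G →L[ℝ] F).hasFDerivAt).comp y
            (hD2at x hxU y (hbally hy)))).hasFDerivWithinAt
      · show ‖ContinuousLinearMap.id ℝ F -
            (J₀.symm : G →L[ℝ] F).comp (fderiv ℝ (fun y' => f (x, y')) y)‖ ≤ 2⁻¹
        have hkey : ContinuousLinearMap.id ℝ F -
            (J₀.symm : G →L[ℝ] F).comp (fderiv ℝ (fun y' => f (x, y')) y) =
            (J₀.symm : G →L[ℝ] F).comp
              ((J₀ : F →L[ℝ] G) - fderiv ℝ (fun y' => f (x, y')) y) := by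
          ext v
          simp [ContinuousLinearMap.sub_apply, J₀.symm_apply_apply, map_sub]
        rw [hkey]
        have h1 := ContinuousLinearMap.opNorm_comp_le (J₀.symm : G →L[ℝ] F) ((J₀ : F →L[ℝ] G) - fderiv ℝ (fun y' => f (x, y')) y)
        have h2 : ‖(J₀ : F →L[ℝ] G) - fderiv ℝ (fun y' => f (x, y')) y‖ ≤ 1 / (2 * L) := by
          rw [norm_sub_rev]
          exact hD2 x hx y hy
        have h3 : L * (1 / (2 * L)) = 2⁻¹ := by
          rw [mul_one_div, div_eq_iff (by positivity)]
          ring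
        have h4 := mul_le_mul_of_nonneg_left h2 hL.le
        linarith
    -- existence and uniqueness of the zero for each x
    have key : ∀ x ∈ ball a r, ∃ y, (y ∈ ball b ry ∧ f (x, y) = 0) ∧
        ∀ y' ∈ ball b ry, f (x, y') = 0 → y' = y := by
      intro x hx
      have hxrx : x ∈ ball a rx := mem_ball.2 (lt_of_lt_of_le (mem_ball.1 hx) hrle2)
      have hxU : x ∈ U := hballx hxrx
      set φ : F → F := fun y => y - J₀.symm (f (x, y)) with hφdef
      have hxa : ‖x - a‖ < ry / (2 * L * M₁) := by
        rw [← dist_eq_norm]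
        exact lt_of_lt_of_le (mem_ball.1 hx) hrle1
      have hfb : ‖f (x, b)‖ ≤ M₁ * ‖x - a‖ := by
        have hmv := Convex.norm_image_sub_le_of_norm_hasFDerivWithin_le
          (f := fun x' => f (x', b))
          (f' := fun x' => fderiv ℝ (fun x'' => f (x'', b)) x')
          (fun x' hx' => (hD1at x' (hballx hx') b hbV).hasFDerivWithinAt)
          (fun x' hx' => hD1 x' hx' b (mem_ball_self hry))
          (convex_ball a rx) (mem_ball_self hrx) hxrx
        beta_reduce at hmv
        rwa [hfab, sub_zero] at hmv
      have hc : ‖φ b - b‖ ≤ L * (M₁ * ‖x - a‖) := by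
        have : φ b - b = -(J₀.symm (f (x, b))) := by simp [hφdef]
        rw [this, norm_neg]
        calc ‖(J₀.symm : G →L[ℝ] F) (f (x, b))‖ ≤ L * ‖f (x, b)‖ :=
              (J₀.symm : G →L[ℝ] F).le_opNorm _
          _ ≤ L * (M₁ * ‖x - a‖) := mul_le_mul_of_nonneg_left hfb hL.le
      have hcry : 2 * ‖φ b - b‖ < ry := by
        have h1 : ‖x - a‖ * (2 * L * M₁) < ry := (lt_div_iff₀ (by positivity)).mp hxa
        nlinarith [norm_nonneg (φ b - b)]
      set c : ℝ := ‖φ b - b‖ with hcdef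
      have hc0 : 0 ≤ c := norm_nonneg _
      set K : Set F := closedBall b (2 * c) with hKdef
      have hKsub : K ⊆ ball b ry := closedBall_subset_ball hcry
      have hmaps : Set.MapsTo φ K K := by
        intro y hy
        have hyb : y ∈ ball b ry := hKsub hy
        have hlip := hphi_lip x hxrx y hyb b (mem_ball_self hry)
        have hyK : ‖y - b‖ ≤ 2 * c := by
          rw [← dist_eq_norm]; exact mem_closedBall.1 hy
        have : ‖φ y - b‖ ≤ 2 * c := by
          calc ‖φ y - b‖ = ‖(φ y - φ b) + (φ b - b)‖ := by rw [sub_add_sub_cancel]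
            _ ≤ ‖φ y - φ b‖ + ‖φ b - b‖ := norm_add_le _ _
            _ ≤ 2⁻¹ * ‖y - b‖ + c := add_le_add hlip le_rfl
            _ ≤ 2⁻¹ * (2 * c) + c := by nlinarith
            _ = 2 * c := by ring
        rw [hKdef, mem_closedBall, dist_eq_norm]
        exact this
      have hlipK : LipschitzOnWith (1/2 : NNReal) φ K :=
        LipschitzOnWith.of_dist_le_mul fun y₁ h₁ y₂ h₂ => by
          rw [dist_eq_norm, dist_eq_norm]
          have := hphi_lip x hxrx y₁ (hKsub h₁) y₂ (hKsub h₂)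
          calc ‖φ y₁ - φ y₂‖ ≤ 2⁻¹ * ‖y₁ - y₂‖ := this
            _ = ((1/2 : NNReal) : ℝ) * ‖y₁ - y₂‖ := by norm_num
      have hcontract : ContractingWith (1/2) (hmaps.restrict φ K K) :=
        ⟨by rw [← NNReal.coe_lt_coe]; norm_num, hlipK.mapsToRestrict hmaps⟩
      have hKc : IsComplete K := isClosed_closedBall.isComplete
      have hbK : b ∈ K := mem_closedBall_self (by linarith)
      set y0 := ContractingWith.efixedPoint' φ hKc hmaps hcontract b hbK (edist_ne_top _ _)
        with hy0def
      have hy0K : y0 ∈ K :=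
        ContractingWith.efixedPoint_mem' hKc hmaps hcontract hbK (edist_ne_top _ _)
      have hy0fix : φ y0 = y0 :=
        ContractingWith.efixedPoint_isFixedPt' hKc hmaps hcontract hbK (edist_ne_top _ _)
      have hy0ball : y0 ∈ ball b ry := hKsub hy0K
      have hfy0 : f (x, y0) = 0 := by
        have h1 : J₀.symm (f (x, y0)) = 0 := by
          have := hy0fix
          rw [hφdef] at this
          simpa [sub_eq_self] using this
        rw [← J₀.apply_symm_apply (f (x, y0)), h1, map_zero]
      refine ⟨y0, ⟨hy0ball, hfy0⟩, fun y' hy' hfy' => ?_⟩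
      have h1 := hphi_lip x hxrx y' hy' y0 hy0ball
      rw [hfy', hfy0] at h1
      simp only [map_zero, sub_zero] at h1
      have h2 : ‖y' - y0‖ ≤ 0 := by linarith
      have h3 : y' - y0 = 0 := by
        have := norm_nonneg (y' - y0)
        exact norm_eq_zero.1 (le_antisymm h2 this)
      exact sub_eq_zero.1 h3
    -- the implicit map
    set g : E → F := fun x => if h : x ∈ ball a r then (key x h).choose else b with hgdef
    have hg0 : ∀ x (hx : x ∈ ball a r), g x ∈ ball b ry ∧ f (x, g x) = 0 ∧
        ∀ y' ∈ ball b ry, f (x, y') = 0 → y' = g x := by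
      intro x hx
      have hspec := (key x hx).choose_spec
      rw [hgdef]
      simp only [dif_pos hx]
      exact ⟨hspec.1.1, hspec.1.2, hspec.2⟩
    have hga : g a = b := by
      have ha : a ∈ ball a r := mem_ball_self hr
      exact ((hg0 a ha).2.2 b (mem_ball_self hry) hfab).symm
    -- smoothness and derivative formula at each point
    have main : ∀ x₀ ∈ ball a r, ContDiffAt ℝ p g x₀ ∧
        ∃ T : F ≃L[ℝ] G,
          (T : F →L[ℝ] G) = fderiv ℝ (fun y' => f (x₀, y')) (g x₀) ∧
          fderiv ℝ g x₀ =
            -((T.symm : G →L[ℝ] F).comp (fderiv ℝ (fun x' => f (x', g x₀)) x₀)) := by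
      intro x₀ hx₀
      have hx₀rx : x₀ ∈ ball a rx := mem_ball.2 (lt_of_lt_of_le (mem_ball.1 hx₀) hrle2)
      have hx₀U : x₀ ∈ U := hballx hx₀rx
      obtain ⟨hy₀ball, hfxy₀, huniq⟩ := hg0 x₀ hx₀
      set y₀ : F := g x₀ with hy₀def
      have hy₀V : y₀ ∈ V := hbally hy₀ball
      set D2 : F →L[ℝ] G := fderiv ℝ (fun y' => f (x₀, y')) y₀ with hD2def
      set D1 : E →L[ℝ] G := fderiv ℝ (fun x' => f (x', y₀)) x₀ with hD1def
      -- invertibility of D2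
      have hD2norm : ‖(J₀ : F →L[ℝ] G) - D2‖ ≤ 1 / (2 * L) := by
        rw [norm_sub_rev]
        exact hD2 x₀ hx₀rx y₀ hy₀ball
      set t : F →L[ℝ] F := (J₀.symm : G →L[ℝ] F).comp ((J₀ : F →L[ℝ] G) - D2) with htdef
      have ht : ‖t‖ < 1 := by
        calc ‖t‖ ≤ L * ‖(J₀ : F →L[ℝ] G) - D2‖ := ContinuousLinearMap.opNorm_comp_le _ _
          _ ≤ L * (1 / (2 * L)) := mul_le_mul_of_nonneg_left hD2norm hL.le
          _ = 2⁻¹ := by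
              rw [mul_one_div, div_eq_iff (by positivity)]
              ring
          _ < 1 := by norm_num
      set T : F ≃L[ℝ] G :=
        (ContinuousLinearEquiv.ofUnit (Units.oneSub t ht)).trans J₀ with hTdef
      have hTv : ∀ v, T v = D2 v := by
        intro v
        have h1 : T v = J₀ (v - J₀.symm ((J₀ : F →L[ℝ] G) v - D2 v)) := rfl
        rw [h1, map_sub, J₀.apply_symm_apply]
        have h2 : (J₀ : F →L[ℝ] G) v = J₀ v := rfl
        rw [h2]
        abel
      have hT : (T : F →L[ℝ] G) = D2 := ContinuousLinearMap.ext hTv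
      -- total derivative
      have hfat₀ : DifferentiableAt ℝ f (x₀, y₀) := hfat x₀ hx₀U y₀ hy₀V
      set Df : (E × F) →L[ℝ] G := fderiv ℝ f (x₀, y₀) with hDfdef
      have hDfat : HasFDerivAt f Df (x₀, y₀) := hfat₀.hasFDerivAt
      have hD1at' : HasFDerivAt (fun x' => f (x', y₀))
          (Df.comp (ContinuousLinearMap.inl ℝ E F)) x₀ := by
        have := hDfat.comp x₀ (hasFDerivAt_prodMk_left (𝕜 := ℝ) (F := F) x₀ y₀)
        simpa [Function.comp_def] using this
      have hD2at' : HasFDerivAt (fun y' => f (x₀, y'))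
          (Df.comp (ContinuousLinearMap.inr ℝ E F)) y₀ := by
        have := hDfat.comp y₀ (hasFDerivAt_prodMk_right x₀ y₀)
        simpa [Function.comp_def] using this
      have hD1eq : D1 = Df.comp (ContinuousLinearMap.inl ℝ E F) := hD1at'.fderiv
      have hD2eq : D2 = Df.comp (ContinuousLinearMap.inr ℝ E F) := hD2at'.fderiv
      have hsplit : ∀ u v, Df (u, v) = D1 u + D2 v := by
        intro u v
        rw [hD1eq, hD2eq]
        simp only [ContinuousLinearMap.comp_apply, ContinuousLinearMap.inl_apply,
          ContinuousLinearMap.inr_apply]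
        rw [← map_add]
        congr 1
        simp [Prod.ext_iff]
      -- the equivalence DΦ
      set N : (E × F) →L[ℝ] (E × G) := (ContinuousLinearMap.fst ℝ E F).prod Df with hNdef
      set Minv : (E × G) →L[ℝ] (E × F) := (ContinuousLinearMap.fst ℝ E G).prod
        ((T.symm : G →L[ℝ] F).comp ((ContinuousLinearMap.snd ℝ E G) -
          D1.comp (ContinuousLinearMap.fst ℝ E G))) with hMdef
      have hleft : Function.LeftInverse Minv N := by
        rintro ⟨u, v⟩
        simp only [hNdef, hMdef, ContinuousLinearMap.prod_apply,
          ContinuousLinearMap.coe_fst', ContinuousLinearMap.coe_snd',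
          ContinuousLinearMap.comp_apply, ContinuousLinearMap.sub_apply,
          ContinuousLinearEquiv.coe_coe]
        refine Prod.ext rfl ?_
        simp only [hsplit u v, add_sub_cancel_left]
        rw [← hTv v, T.symm_apply_apply]
      have hright : Function.RightInverse Minv N := by
        rintro ⟨u, w⟩
        simp only [hNdef, hMdef, ContinuousLinearMap.prod_apply,
          ContinuousLinearMap.coe_fst', ContinuousLinearMap.coe_snd',
          ContinuousLinearMap.comp_apply, ContinuousLinearMap.sub_apply,
          ContinuousLinearEquiv.coe_coe]
        refine Prod.ext rfl ?_
        rw [hsplit]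
        show D1 u + D2 (T.symm (w - D1 u)) = w
        rw [← hTv (T.symm (w - D1 u)), T.apply_symm_apply]
        abel
      set Ψ : (E × F) ≃L[ℝ] (E × G) :=
        ContinuousLinearEquiv.equivOfInverse N Minv hleft hright with hΨdef
      -- Φ and its local inverse
      set Φ : E × F → E × G := fun z => (z.1, f z) with hΦdef
      have hΦcd : ContDiffAt ℝ p Φ (x₀, y₀) :=
        contDiffAt_fst.prodMk (hf.contDiffAt (hopen.mem_nhds ⟨hx₀U, hy₀V⟩))
      have hΦderiv : HasFDerivAt Φ (Ψ : (E × F) →L[ℝ] (E × G)) (x₀, y₀) :=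
        hasFDerivAt_fst.prodMk hDfat
      have hstrict : HasStrictFDerivAt Φ (Ψ : (E × F) →L[ℝ] (E × G)) (x₀, y₀) :=
        hΦcd.hasStrictFDerivAt' hΦderiv hp0
      set inv : E × G → E × F := hstrict.localInverse Φ Ψ (x₀, y₀) with hinvdef
      have hΦpt : Φ (x₀, y₀) = (x₀, 0) := by rw [hΦdef]; simp [hfxy₀]
      have hinvx0 : inv (x₀, 0) = (x₀, y₀) := by
        have := hstrict.localInverse_apply_image
        rwa [hΦpt] at this
      have hev2 : ∀ᶠ w in nhds (x₀, (0 : G)), Φ (inv w) = w := by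
        have := hstrict.eventually_right_inverse
        rwa [hΦpt] at this
      have hcontinv : ContinuousAt inv (x₀, 0) := by
        have := hstrict.localInverse_continuousAt
        rwa [hΦpt] at this
      have hinvcd : ContDiffAt ℝ p inv (x₀, 0) := by
        have := hΦcd.to_localInverse hΦderiv hp0
        rwa [hΦpt] at this
      have hpaircont : ContinuousAt (fun x : E => ((x, (0 : G)) : E × G)) x₀ :=
        (continuous_id.prodMk continuous_const).continuousAt
      have hev3 : ∀ᶠ x in nhds x₀, Φ (inv (x, 0)) = (x, 0) :=
        hpaircont.tendsto.eventually hev2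
      have hhx₀ : (inv (x₀, 0)).2 = y₀ := by rw [hinvx0]
      have hhcd : ContDiffAt ℝ p (fun x : E => (inv (x, 0)).2) x₀ :=
        contDiffAt_snd.comp x₀ (hinvcd.comp x₀ (contDiffAt_id.prodMk contDiffAt_const))
      have hhcont : ContinuousAt (fun x : E => (inv (x, 0)).2) x₀ := hhcd.continuousAt
      have hev4 : ∀ᶠ x in nhds x₀, (inv (x, 0)).2 ∈ ball b ry := by
        have := hhcont.tendsto
        rw [hhx₀] at this
        exact this.eventually (isOpen_ball.eventually_mem hy₀ball)
      have hev5 : ∀ᶠ x in nhds x₀, x ∈ ball a r := isOpen_ball.eventually_mem hx₀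
      have heq : ∀ᶠ x in nhds x₀, g x = (inv (x, 0)).2 := by
        filter_upwards [hev3, hev4, hev5] with x h3 h4 h5
        have h31 : (inv (x, 0)).1 = x := congrArg Prod.fst h3
        have h32 : f (inv (x, 0)) = 0 := congrArg Prod.snd h3
        have hpair : inv (x, 0) = (x, (inv (x, 0)).2) := Prod.ext h31 rfl
        have h32' : f (x, (inv (x, 0)).2) = 0 := by rw [← hpair]; exact h32
        exact ((hg0 x h5).2.2 _ h4 h32').symm
      have hgcd : ContDiffAt ℝ p g x₀ := hhcd.congr_of_eventuallyEq heq
      refine ⟨hgcd, T, hT, ?_⟩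
      -- derivative formula
      · have hgdiff : DifferentiableAt ℝ g x₀ := hgcd.differentiableAt hp0
        set Dg : E →L[ℝ] F := fderiv ℝ g x₀ with hDgdef
        have hcomp : HasFDerivAt (fun x => f (x, g x))
            (Df.comp ((ContinuousLinearMap.id ℝ E).prod Dg)) x₀ := by
          have := hDfat.comp x₀ ((hasFDerivAt_id x₀).prodMk hgdiff.hasFDerivAt)
          simpa [Function.comp_def] using this
        have hzero : (fun x => f (x, g x)) =ᶠ[nhds x₀] fun _ => (0 : G) := by
          filter_upwards [hev5] with x hx
          exact (hg0 x hx).2.1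
        have hzero' : HasFDerivAt (fun x => f (x, g x)) (0 : E →L[ℝ] G) x₀ :=
          (hasFDerivAt_const (0 : G) x₀).congr_of_eventuallyEq hzero
        have hDcomp0 : Df.comp ((ContinuousLinearMap.id ℝ E).prod Dg) = 0 :=
          hcomp.unique hzero'
        ext u
        have h0 : Df (u, Dg u) = 0 := by
          have := congrArg (fun m : E →L[ℝ] G => m u) hDcomp0
          simpa using this
        rw [hsplit] at h0
        have hD2Dg : D2 (Dg u) = -(D1 u) := by
          rw [eq_neg_iff_add_eq_zero, add_comm]
          exact h0
        have hmain : Dg u = -(T.symm (D1 u)) := by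
          calc Dg u = T.symm (T (Dg u)) := (T.symm_apply_apply _).symm
            _ = T.symm (D2 (Dg u)) := by rw [hTv]
            _ = T.symm (-(D1 u)) := by rw [hD2Dg]
            _ = -(T.symm (D1 u)) := map_neg _ _
        simpa using hmain
    refine ⟨g, hga, fun x hx => ?_, fun x hx => ((main x hx).1).contDiffWithinAt⟩
    obtain ⟨hcd, T, hTeq, hformula⟩ := main x hx
    exact ⟨(hg0 x hx).1, (hg0 x hx).2.1, fun y hy hfy => (hg0 x hx).2.2 y hy hfy,
      T, hTeq, hformula⟩
end

section
/- There exists an absolute constant C > 0 with the following property. Let A be a Hermitian operator on a finite-dimensional complex inner product space, let Ψ₀, Ψ₁ be orthonormal vectors with AΨ₀ = E₀Ψ₀ and AΨ₁ = E₁Ψ₁ for real numbers E₀, E₁, let δ ≥ 0, and let Φ₀, Φ₁ be unit vectors with ‖Φ₀ − Ψ₀‖ ≤ δ and ‖Φ₁ − Ψ₁‖ ≤ δ. Let O be a linear operator with operator norm ‖O‖ ≤ 1 satisfying OΦ₀ = Φ₁ and OΦ₁ = Φ₀, and set Φ₊ = (Φ₀ + Φ₁)/√2. Then for every real t, | ⟨Φ₊,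 e^{iAt} O e^{−iAt} Φ₊⟩ − cos((E₁ − E₀)t) | ≤ Cδ. -/
lemma exp_smul_eigen {V : Type} [NormedAddCommGroup V] [InnerProductSpace ℂ V]
    [FiniteDimensional ℂ V]
    (A : V →L[ℂ] V) (c μ : ℂ) (v : V) (h : A v = μ • v) :
    NormedSpace.exp (c • A) v = Complex.exp (c * μ) • v := by
  have hpow : ∀ n : ℕ, ((c • A) ^ n) v = (c * μ) ^ n • v := by
    intro n
    induction n with
    | zero => simp
    | succ n ih =>
      rw [pow_succ, ContinuousLinearMap.mul_apply]
      have h1 : (c • A) v = (c * μ) • v := by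
        rw [ContinuousLinearMap.smul_apply, h, smul_smul]
      rw [h1, map_smul, ih, smul_smul, ← pow_succ']
  have hsum : Summable fun n : ℕ => ((n.factorial : ℂ))⁻¹ • (c • A) ^ n :=
    NormedSpace.expSeries_summable' (𝕂 := ℂ) (c • A)
  have happ : NormedSpace.exp (c • A) v
      = ∑' n : ℕ, (((n.factorial : ℂ))⁻¹ • (c • A) ^ n) v := by
    rw [NormedSpace.exp_eq_tsum (𝕂 := ℂ)]
    exact (ContinuousLinearMap.apply ℂ V v).map_tsum hsum
  rw [happ]
  have hterm : ∀ n : ℕ, (((n.factorial : ℂ))⁻¹ • (c • A) ^ n) v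
      = (((n.factorial : ℂ))⁻¹ * (c * μ) ^ n) • v := by
    intro n
    rw [ContinuousLinearMap.smul_apply, hpow, smul_smul]
  rw [tsum_congr hterm]
  have hs2 : Summable fun n : ℕ => ((n.factorial : ℂ))⁻¹ * (c * μ) ^ n := by
    simpa [smul_eq_mul] using NormedSpace.expSeries_summable' (𝕂 := ℂ) (c * μ)
  rw [hs2.tsum_smul_const]
  congr 1
  rw [Complex.exp_eq_exp_ℂ, NormedSpace.exp_eq_tsum (𝕂 := ℂ)]
  simp [smul_eq_mul]

lemma aux_iso {V : Type} [NormedAddCommGroup V] [InnerProductSpace ℂ V]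
    [FiniteDimensional ℂ V]
    (P : V →L[ℂ] V) (h : star P * P = 1) (w : V) : ‖P w‖ = ‖w‖ := by
  rw [ContinuousLinearMap.star_eq_adjoint] at h
  have h2 : (ContinuousLinearMap.adjoint P) (P w) = w := by
    have := congrArg (fun (T : V →L[ℂ] V) => T w) h
    simpa [ContinuousLinearMap.mul_apply] using this
  have h1 : (inner ℂ (P w) (P w) : ℂ) = inner ℂ w w := by
    calc (inner ℂ (P w) (P w) : ℂ)
        = inner ℂ ((ContinuousLinearMap.adjoint P) (P w)) w :=
          (ContinuousLinearMap.adjoint_inner_left P w (P w)).symm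
      _ = inner ℂ w w := by rw [h2]
  have h4 : ‖P w‖^2 = ‖w‖^2 := by
    rw [inner_self_eq_norm_sq_to_K, inner_self_eq_norm_sq_to_K] at h1
    exact_mod_cast h1
  calc ‖P w‖ = Real.sqrt (‖P w‖^2) := (Real.sqrt_sq (norm_nonneg _)).symm
    _ = Real.sqrt (‖w‖^2) := by rw [h4]
    _ = ‖w‖ := Real.sqrt_sq (norm_nonneg _)


set_option maxHeartbeats 1000000 in

/-- There is an absolute constant `C > 0` such that: for any Hermitian operator
`A` on a finite-dimensional complex inner product space with orthonormal eigenvectors `Ψ₀, Ψ₁`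
(eigenvalues `E₀, E₁`), any unit vectors `Φ₀, Φ₁` that are `δ`-close to `Ψ₀, Ψ₁`, and any
operator `O` of norm at most 1 swapping `Φ₀` and `Φ₁`, setting `Φ₊ = (Φ₀+Φ₁)/√2`, for every
real `t` we have `|⟨Φ₊, e^{iAt} O e^{−iAt} Φ₊⟩ − cos((E₁−E₀)t)| ≤ Cδ`. -/
theorem stmt_11 : ∃ C : ℝ, 0 < C ∧
    ∀ (V : Type) [NormedAddCommGroup V] [InnerProductSpace ℂ V] [FiniteDimensional ℂ V],
      ∀ (A : V →L[ℂ] V), IsSelfAdjoint A →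
      ∀ (Ψ₀ Ψ₁ : V) (E₀ E₁ : ℝ),
        ‖Ψ₀‖ = 1 → ‖Ψ₁‖ = 1 → (inner ℂ Ψ₀ Ψ₁ : ℂ) = 0 →
        A Ψ₀ = (E₀ : ℂ) • Ψ₀ → A Ψ₁ = (E₁ : ℂ) • Ψ₁ →
      ∀ (δ : ℝ), 0 ≤ δ →
      ∀ (Φ₀ Φ₁ : V), ‖Φ₀‖ = 1 → ‖Φ₁‖ = 1 → ‖Φ₀ - Ψ₀‖ ≤ δ → ‖Φ₁ - Ψ₁‖ ≤ δ →
      ∀ (O : V →L[ℂ] V), ‖O‖ ≤ 1 → O Φ₀ = Φ₁ → O Φ₁ = Φ₀ →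
      ∀ t : ℝ,
        ‖((inner ℂ (((Real.sqrt 2 : ℝ) : ℂ)⁻¹ • (Φ₀ + Φ₁))
              ((NormedSpace.exp (((t : ℂ) * Complex.I) • A) ∘L O ∘L
                NormedSpace.exp ((-(t : ℂ) * Complex.I) • A))
                (((Real.sqrt 2 : ℝ) : ℂ)⁻¹ • (Φ₀ + Φ₁))) : ℂ)
            - ((Real.cos ((E₁ - E₀) * t) : ℝ) : ℂ))‖ ≤ C * δ := by
  refine ⟨8, by norm_num, ?_⟩
  intro V _ _ _ A hA Ψ₀ Ψ₁ E₀ E₁ hΨ₀ hΨ₁ horth hAΨ₀ hAΨ₁ δ hδ Φ₀ Φ₁ hΦ₀ hΦ₁ hd₀ hd₁ O hO hO₀ hO₁ t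
  set c : ℂ := (t : ℂ) * Complex.I with hc
  rw [show (-(t:ℂ) * Complex.I) = -c from by rw [hc]; ring]
  set U : V →L[ℂ] V := NormedSpace.exp (c • A) with hUdef
  set W : V →L[ℂ] V := NormedSpace.exp ((-c) • A) with hWdef
  have hstarc : star c = -c := by
    rw [hc, Complex.star_def]
    simp [Complex.ext_iff]
  have hstarU : star U = W := by
    rw [hUdef, hWdef, NormedSpace.star_exp, star_smul, hA.star_eq, hstarc]
  have hstarW : star W = U := by
    rw [← hstarU, star_star]
  have hcomm : Commute ((-c) • A) (c • A) :=
    ((Commute.refl A).smul_left (-c)).smul_right c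
  have hWU : W * U = 1 := by
    letI : NormedAlgebra ℚ (V →L[ℂ] V) := NormedAlgebra.restrictScalars ℚ ℂ (V →L[ℂ] V)
    rw [hUdef, hWdef, ← NormedSpace.exp_add_of_commute hcomm]
    rw [show (-c) • A + c • A = 0 from by rw [← add_smul]; simp]
    exact NormedSpace.exp_zero
  have hUW : U * W = 1 := by
    letI : NormedAlgebra ℚ (V →L[ℂ] V) := NormedAlgebra.restrictScalars ℚ ℂ (V →L[ℂ] V)
    rw [hUdef, hWdef, ← NormedSpace.exp_add_of_commute hcomm.symm]
    rw [show c • A + (-c) • A = 0 from by rw [← add_smul]; simp]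
    exact NormedSpace.exp_zero
  have hisoU : ∀ w : V, ‖U w‖ = ‖w‖ := fun w => aux_iso U (by rw [hstarU]; exact hWU) w
  have hisoW : ∀ w : V, ‖W w‖ = ‖w‖ := fun w => aux_iso W (by rw [hstarW]; exact hUW) w
  have hUΨ₀ : U Ψ₀ = Complex.exp (c * E₀) • Ψ₀ := exp_smul_eigen A c E₀ Ψ₀ hAΨ₀
  have hUΨ₁ : U Ψ₁ = Complex.exp (c * E₁) • Ψ₁ := exp_smul_eigen A c E₁ Ψ₁ hAΨ₁
  have hWΨ₀ : W Ψ₀ = Complex.exp (-c * E₀) • Ψ₀ := exp_smul_eigen A (-c) E₀ Ψ₀ hAΨ₀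
  have hWΨ₁ : W Ψ₁ = Complex.exp (-c * E₁) • Ψ₁ := exp_smul_eigen A (-c) E₁ Ψ₁ hAΨ₁
  set s : ℂ := ((Real.sqrt 2 : ℝ) : ℂ)⁻¹ with hs
  set Φp : V := s • (Φ₀ + Φ₁) with hΦp
  set Ψp : V := s • (Ψ₀ + Ψ₁) with hΨp
  set B : V →L[ℂ] V := U ∘L O ∘L W with hBdef
  have hBapp : ∀ w : V, B w = U (O (W w)) := fun w => rfl
  set u₀ : V := O Ψ₀ - Ψ₁ with hu₀
  set u₁ : V := O Ψ₁ - Ψ₀ with hu₁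
  set rv : V := s • (Complex.exp (-c * E₀) • U u₀ + Complex.exp (-c * E₁) • U u₁) with hrv
  have hOΨ₀ : O Ψ₀ = Ψ₁ + u₀ := by rw [hu₀]; abel
  have hOΨ₁ : O Ψ₁ = Ψ₀ + u₁ := by rw [hu₁]; abel
  have hBΨp : B Ψp = s • ((Complex.exp (-c * E₀) * Complex.exp (c * E₁)) • Ψ₁
      + (Complex.exp (-c * E₁) * Complex.exp (c * E₀)) • Ψ₀) + rv := by
    rw [hBapp, hΨp, hrv]
    simp only [map_add, map_smul, hWΨ₀, hWΨ₁, hOΨ₀, hOΨ₁, hUΨ₀, hUΨ₁, smul_add, smul_smul]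
    module
  have horth' : (inner ℂ Ψ₁ Ψ₀ : ℂ) = 0 := by
    rw [← inner_conj_symm, horth, map_zero]
  have hn₀ : (inner ℂ Ψ₀ Ψ₀ : ℂ) = 1 := by
    rw [inner_self_eq_norm_sq_to_K, hΨ₀]; norm_num
  have hn₁ : (inner ℂ Ψ₁ Ψ₁ : ℂ) = 1 := by
    rw [inner_self_eq_norm_sq_to_K, hΨ₁]; norm_num
  have hsr : (starRingEnd ℂ) s = s := by
    rw [hs]; simp [Complex.conj_ofReal]
  have hss : s * s = 1 / 2 := by
    rw [hs, ← mul_inv, ← Complex.ofReal_mul, Real.mul_self_sqrt (by norm_num : (2:ℝ) ≥ 0)]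
    norm_num
  have hcos : Complex.exp (-c * E₀) * Complex.exp (c * E₁)
      + Complex.exp (-c * E₁) * Complex.exp (c * E₀)
      = 2 * ((Real.cos ((E₁ - E₀) * t) : ℝ) : ℂ) := by
    rw [← Complex.exp_add, ← Complex.exp_add]
    have h1 : -c * E₀ + c * E₁ = (((E₁ - E₀) * t : ℝ) : ℂ) * Complex.I := by
      rw [hc]; push_cast; ring
    have h2 : -c * E₁ + c * E₀ = ((-((E₁ - E₀) * t) : ℝ) : ℂ) * Complex.I := by
      rw [hc]; push_cast; ring
    rw [h1, h2, Complex.exp_mul_I, Complex.exp_mul_I, Complex.ofReal_cos]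
    push_cast
    rw [Complex.cos_neg, Complex.sin_neg]
    ring
  have hmain : (inner ℂ Ψp (B Ψp) : ℂ)
      = ((Real.cos ((E₁ - E₀) * t) : ℝ) : ℂ) + inner ℂ Ψp rv := by
    rw [hBΨp, inner_add_right]
    congr 1
    rw [hΨp]
    simp only [inner_smul_right, inner_smul_left, inner_add_left, inner_add_right,
      horth, horth', hn₀, hn₁, hsr]
    rw [show ∀ x y : ℂ, s * (x * (s * (0 + 1)) + y * (s * (1 + 0))) = s * s * (x + y) from
      by intros; ring]
    rw [hss, hcos]
    ring
  have hdecomp : (inner ℂ Φp (B Φp) : ℂ) - ((Real.cos ((E₁ - E₀) * t) : ℝ) : ℂ)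
      = inner ℂ (Φp - Ψp) (B Φp) + inner ℂ Ψp (B (Φp - Ψp)) + inner ℂ Ψp rv := by
    have e1 : (inner ℂ Φp (B Φp) : ℂ) = inner ℂ (Φp - Ψp) (B Φp) + inner ℂ Ψp (B Φp) := by
      rw [inner_sub_left]; ring
    have e2 : (inner ℂ Ψp (B Φp) : ℂ) = inner ℂ Ψp (B (Φp - Ψp)) + inner ℂ Ψp (B Ψp) := by
      rw [map_sub, inner_sub_right]; ring
    rw [e1, e2, hmain]; ring
  have h2pos : (0:ℝ) < Real.sqrt 2 := Real.sqrt_pos.mpr (by norm_num)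
  have h2sq : Real.sqrt 2 * Real.sqrt 2 = 2 := Real.mul_self_sqrt (by norm_num)
  have hrc : Real.sqrt 2 * (Real.sqrt 2)⁻¹ = 1 := mul_inv_cancel₀ (ne_of_gt h2pos)
  have hsn : ‖s‖ = (Real.sqrt 2)⁻¹ := by
    rw [hs, norm_inv, Complex.norm_real, Real.norm_eq_abs, abs_of_nonneg (Real.sqrt_nonneg 2)]
  have hΦpn : ‖Φp‖ ≤ Real.sqrt 2 := by
    rw [hΦp, norm_smul, hsn]
    have h1 : ‖Φ₀ + Φ₁‖ ≤ 2 := by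
      calc ‖Φ₀ + Φ₁‖ ≤ ‖Φ₀‖ + ‖Φ₁‖ := norm_add_le _ _
        _ = 2 := by rw [hΦ₀, hΦ₁]; norm_num
    calc (Real.sqrt 2)⁻¹ * ‖Φ₀ + Φ₁‖ ≤ (Real.sqrt 2)⁻¹ * 2 :=
          mul_le_mul_of_nonneg_left h1 (by positivity)
      _ = Real.sqrt 2 := by field_simp; rw [Real.sq_sqrt (by norm_num)]
  have hΨpn : ‖Ψp‖ ≤ Real.sqrt 2 := by
    rw [hΨp, norm_smul, hsn]
    have h1 : ‖Ψ₀ + Ψ₁‖ ≤ 2 := by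
      calc ‖Ψ₀ + Ψ₁‖ ≤ ‖Ψ₀‖ + ‖Ψ₁‖ := norm_add_le _ _
        _ = 2 := by rw [hΨ₀, hΨ₁]; norm_num
    calc (Real.sqrt 2)⁻¹ * ‖Ψ₀ + Ψ₁‖ ≤ (Real.sqrt 2)⁻¹ * 2 :=
          mul_le_mul_of_nonneg_left h1 (by positivity)
      _ = Real.sqrt 2 := by field_simp; rw [Real.sq_sqrt (by norm_num)]
  have hdiffn : ‖Φp - Ψp‖ ≤ Real.sqrt 2 * δ := by
    have e : Φp - Ψp = s • ((Φ₀ - Ψ₀) + (Φ₁ - Ψ₁)) := by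
      rw [hΦp, hΨp]; module
    rw [e, norm_smul, hsn]
    have h1 : ‖(Φ₀ - Ψ₀) + (Φ₁ - Ψ₁)‖ ≤ 2 * δ :=
      le_trans (norm_add_le _ _) (by linarith)
    calc (Real.sqrt 2)⁻¹ * ‖(Φ₀ - Ψ₀) + (Φ₁ - Ψ₁)‖ ≤ (Real.sqrt 2)⁻¹ * (2 * δ) :=
          mul_le_mul_of_nonneg_left h1 (by positivity)
      _ = Real.sqrt 2 * δ := by
          field_simp
          linear_combination (-δ) * h2sq
  have hOle : ∀ w : V, ‖O w‖ ≤ ‖w‖ := fun w => by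
    calc ‖O w‖ ≤ ‖O‖ * ‖w‖ := O.le_opNorm w
      _ ≤ 1 * ‖w‖ := mul_le_mul_of_nonneg_right hO (norm_nonneg _)
      _ = ‖w‖ := one_mul _
  have hBn : ∀ w : V, ‖B w‖ ≤ ‖w‖ := fun w => by
    rw [hBapp, hisoU]
    calc ‖O (W w)‖ ≤ ‖W w‖ := hOle _
      _ = ‖w‖ := hisoW _
  have habs : ∀ r : ℝ, ‖Complex.exp (-c * (r:ℂ))‖ = 1 := fun r => by
    rw [Complex.norm_exp, hc]
    simp
  have hu₀n : ‖u₀‖ ≤ 2 * δ := by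
    have e : u₀ = O (Ψ₀ - Φ₀) + (Φ₁ - Ψ₁) := by rw [hu₀, map_sub, hO₀]; abel
    rw [e]
    calc ‖O (Ψ₀ - Φ₀) + (Φ₁ - Ψ₁)‖ ≤ ‖O (Ψ₀ - Φ₀)‖ + ‖Φ₁ - Ψ₁‖ := norm_add_le _ _
      _ ≤ ‖Ψ₀ - Φ₀‖ + δ := add_le_add (hOle _) hd₁
      _ ≤ 2 * δ := by rw [norm_sub_rev]; linarith
  have hu₁n : ‖u₁‖ ≤ 2 * δ := by
    have e : u₁ = O (Ψ₁ - Φ₁) + (Φ₀ - Ψ₀) := by rw [hu₁, map_sub, hO₁]; abel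
    rw [e]
    calc ‖O (Ψ₁ - Φ₁) + (Φ₀ - Ψ₀)‖ ≤ ‖O (Ψ₁ - Φ₁)‖ + ‖Φ₀ - Ψ₀‖ := norm_add_le _ _
      _ ≤ ‖Ψ₁ - Φ₁‖ + δ := add_le_add (hOle _) hd₀
      _ ≤ 2 * δ := by rw [norm_sub_rev]; linarith
  have hrvn : ‖rv‖ ≤ (Real.sqrt 2)⁻¹ * (4 * δ) := by
    rw [hrv, norm_smul, hsn]
    have h1 : ‖Complex.exp (-c * (E₀:ℂ)) • U u₀ + Complex.exp (-c * (E₁:ℂ)) • U u₁‖ ≤ 4 * δ := by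
      calc ‖Complex.exp (-c * (E₀:ℂ)) • U u₀ + Complex.exp (-c * (E₁:ℂ)) • U u₁‖
          ≤ ‖Complex.exp (-c * (E₀:ℂ)) • U u₀‖ + ‖Complex.exp (-c * (E₁:ℂ)) • U u₁‖ :=
            norm_add_le _ _
        _ = ‖U u₀‖ + ‖U u₁‖ := by
            rw [norm_smul, norm_smul, habs E₀, habs E₁, one_mul, one_mul]
        _ = ‖u₀‖ + ‖u₁‖ := by rw [hisoU, hisoU]
        _ ≤ 2 * δ + 2 * δ := add_le_add hu₀n hu₁n
        _ = 4 * δ := by ring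
    exact mul_le_mul_of_nonneg_left h1 (by positivity)
  have b1 : ‖(inner ℂ (Φp - Ψp) (B Φp) : ℂ)‖ ≤ 2 * δ := by
    calc ‖(inner ℂ (Φp - Ψp) (B Φp) : ℂ)‖ ≤ ‖Φp - Ψp‖ * ‖B Φp‖ := norm_inner_le_norm _ _
      _ ≤ (Real.sqrt 2 * δ) * Real.sqrt 2 :=
          mul_le_mul hdiffn (le_trans (hBn _) hΦpn) (norm_nonneg _) (by positivity)
      _ = 2 * δ := by linear_combination δ * h2sq
  have b2 : ‖(inner ℂ Ψp (B (Φp - Ψp)) : ℂ)‖ ≤ 2 * δ := by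
    calc ‖(inner ℂ Ψp (B (Φp - Ψp)) : ℂ)‖ ≤ ‖Ψp‖ * ‖B (Φp - Ψp)‖ := norm_inner_le_norm _ _
      _ ≤ Real.sqrt 2 * (Real.sqrt 2 * δ) :=
          mul_le_mul hΨpn (le_trans (hBn _) hdiffn) (norm_nonneg _) (le_of_lt h2pos)
      _ = 2 * δ := by linear_combination δ * h2sq
  have b3 : ‖(inner ℂ Ψp rv : ℂ)‖ ≤ 4 * δ := by
    calc ‖(inner ℂ Ψp rv : ℂ)‖ ≤ ‖Ψp‖ * ‖rv‖ := norm_inner_le_norm _ _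
      _ ≤ Real.sqrt 2 * ((Real.sqrt 2)⁻¹ * (4 * δ)) :=
          mul_le_mul hΨpn hrvn (norm_nonneg _) (le_of_lt h2pos)
      _ = 4 * δ := by rw [← mul_assoc, hrc, one_mul]
  calc ‖(inner ℂ Φp (B Φp) : ℂ) - ((Real.cos ((E₁ - E₀) * t) : ℝ) : ℂ)‖
      = ‖(inner ℂ (Φp - Ψp) (B Φp) : ℂ) + inner ℂ Ψp (B (Φp - Ψp)) + inner ℂ Ψp rv‖ := by
        rw [hdecomp]
    _ ≤ ‖(inner ℂ (Φp - Ψp) (B Φp) : ℂ)‖ + ‖(inner ℂ Ψp (B (Φp - Ψp)) : ℂ)‖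
        + ‖(inner ℂ Ψp rv : ℂ)‖ := norm_add₃_le
    _ ≤ 2 * δ + 2 * δ + 4 * δ := add_le_add (add_le_add b1 b2) b3
    _ = 8 * δ := by ring
end
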